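/- arXiv:2009.13285 — 3 statements merged into one kernel-verified Lean document; each statement's English description precedes it below -/
import Mathlib

section
/- Let p ≥ 1 be an integer, let e_p be a primitive p-th root of unity in ℂ, and let t ≥ 1 be an integer. Then the following identity holds in the ring ℂ[[x]] of formal power series: (1 + x^{(2t+1)p}) · Σ_{k_t ≥ k_{t−1} ≥ … ≥ k_1 ≥ 0} (x e_p ; e_p)_{k_t} x^{k_t} ∏_{i=1}^{t−1} e_p^{k_i(k_i+1)} x^{2k_i} [k_{i+1} choose k_i]_{e_p} = (1 + x^{p}) · Σ_{p−1 ≥ k_t ≥ k_{t−1} ≥ … ≥ k_1 ≥ 0} (x e_p ; e_p)_{k_t} x^{k_t} ∏_{i=1}^{t−1} e_p^{k_i(k_i+1)} x^{2k_i} [k_{i+1} choose k_i]_{e_p}, where the first sum is over all nonincreasing chains of natural numbers of length t (it defines a formal power series since the term of a chain has x-order at least k_t) and the second sum is the finite sum over such chains with k_t ≤ p−1. -/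
open PowerSeries

/-- Evaluation at `ζ : ℂ` of the Gaussian binomial coefficient `[n choose k]_q ∈ ℤ[q]`,
defined by the `q`-Pascal recursion, agreeing with
`∏_{i=1}^{k} (1−q^{n−k+i})/(1−q^i)` for `k ≤ n` and with `0` for `k > n`. -/
def qbinom : ℕ → ℕ → ℂ → ℂ
  | _, 0, _ => 1
  | 0, _ + 1, _ => 0
  | n + 1, k + 1, ζ => qbinom n k ζ + ζ ^ (k + 1) * qbinom n (k + 1) ζ

/-- The `q`-Pochhammer symbol `(x e ; e)_n = ∏_{i=0}^{n−1} (1 − e^{i+1} x)` as a formal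
power series in `x`. -/
noncomputable def pochSeries (e : ℂ) (n : ℕ) : PowerSeries ℂ :=
  ∏ i ∈ Finset.range n, (1 - PowerSeries.C (e ^ (i + 1)) * PowerSeries.X)

/-- The sum over chains `top = k_{t+1} ≥ k_t ≥ … ≥ k_1 ≥ 0` of
`∏_{i=1}^{t} e^{k_i(k_i+1)} [k_{i+1} choose k_i]_e · x^{2k_i}`, as a formal power series
in `x`; a chain is encoded as a monotone `f : Fin (t+1) → Fin (top+1)` with top value
`top` (so `f i = k_{i+1}`). -/
noncomputable def chainV (t top : ℕ) (e : ℂ) : PowerSeries ℂ :=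
  ∑ f ∈ Finset.univ.filter
      (fun f : Fin (t + 1) → Fin (top + 1) => Monotone f ∧ f (Fin.last t) = Fin.last top),
    ∏ i : Fin t,
      PowerSeries.C (e ^ ((f i.castSucc : ℕ) * ((f i.castSucc : ℕ) + 1)) *
          qbinom (f i.succ : ℕ) (f i.castSucc : ℕ) e) *
        PowerSeries.X ^ (2 * (f i.castSucc : ℕ))

/-- The contribution of all chains with fixed top entry `k_t = m`:
`(x e ; e)_m x^m Σ_{m = k_t ≥ … ≥ k_1 ≥ 0} ∏_{i=1}^{t−1} e^{k_i(k_i+1)} x^{2k_i} [k_{i+1} choose k_i]_e`. -/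
noncomputable def habiroTerm (t : ℕ) (e : ℂ) (m : ℕ) : PowerSeries ℂ :=
  pochSeries e m * PowerSeries.X ^ m * chainV (t - 1) m e

/-- The full sum over all chains `k_t ≥ … ≥ k_1 ≥ 0`, defined coefficientwise:
since the term of a chain has `x`-order at least `k_t`, the coefficient of `x^N`
only receives contributions from chains with `k_t ≤ N`. -/
noncomputable def habiroSeries (t : ℕ) (e : ℂ) : PowerSeries ℂ :=
  PowerSeries.mk fun N => ∑ m ∈ Finset.range (N + 1), PowerSeries.coeff N (habiroTerm t e m)

lemma qbinom_zero (n : ℕ) (ζ : ℂ) : qbinom n 0 ζ = 1 := by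
  cases n <;> rfl

lemma qbinom_of_lt {n k : ℕ} (h : n < k) (ζ : ℂ) : qbinom n k ζ = 0 := by
  induction n generalizing k with
  | zero => obtain ⟨k, rfl⟩ := Nat.exists_eq_add_of_lt h; rfl
  | succ n ih =>
    obtain ⟨k, rfl⟩ : ∃ k', k = k' + 1 := ⟨k - 1, by omega⟩
    show qbinom n k ζ + ζ ^ (k + 1) * qbinom n (k + 1) ζ = 0
    rw [ih (by omega), ih (by omega)]; ring

lemma qbinom_self (n : ℕ) (ζ : ℂ) : qbinom n n ζ = 1 := by
  induction n with
  | zero => rfl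
  | succ n ih =>
    show qbinom n n ζ + ζ ^ (n + 1) * qbinom n (n + 1) ζ = 1
    rw [ih, qbinom_of_lt (by omega)]; ring

open Finset in
lemma qbinom_prod (ζ : ℂ) : ∀ n k, k ≤ n →
    (∏ i ∈ range k, (1 - ζ ^ (i + 1))) * qbinom n k ζ
      = ∏ i ∈ range k, (1 - ζ ^ (n - k + i + 1)) := by
  intro n
  induction n with
  | zero => intro k hk; interval_cases k; simp [qbinom_zero]
  | succ n ih =>
    intro k hk
    match k with
    | 0 => simp [qbinom_zero]
    | k' + 1 =>
      show (∏ i ∈ range (k' + 1), (1 - ζ ^ (i + 1))) *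
        (qbinom n k' ζ + ζ ^ (k' + 1) * qbinom n (k' + 1) ζ) = _
      rcases eq_or_lt_of_le hk with h | h
      · have hk' : k' = n := by omega
        subst hk'
        rw [qbinom_self, qbinom_of_lt (by omega)]
        simp
      · have hk'n : k' + 1 ≤ n := by omega
        have h1 := ih k' (by omega)
        have h2 := ih (k' + 1) hk'n
        set L := ∏ i ∈ range k', (1 - ζ ^ (i + 1)) with hL
        set A := ∏ i ∈ range k', (1 - ζ ^ (n - k' + i + 1)) with hA
        have hLs : (∏ i ∈ range (k' + 1), (1 - ζ ^ (i + 1))) = L * (1 - ζ ^ (k' + 1)) :=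
          prod_range_succ _ _
        have hpow : ∀ a b : ℕ, a = b → (1 - ζ ^ a) = (1 - ζ ^ b) := fun a b h => by rw [h]
        have hB : (∏ i ∈ range (k' + 1), (1 - ζ ^ (n - (k' + 1) + i + 1)))
            = (1 - ζ ^ (n - k')) * A := by
          rw [prod_range_succ', mul_comm]
          congr 1
          · exact hpow _ _ (by omega)
          · exact prod_congr rfl fun i hi => hpow _ _ (by omega)
        have hRHS : (∏ i ∈ range (k' + 1), (1 - ζ ^ (n + 1 - (k' + 1) + i + 1)))
            = A * (1 - ζ ^ (n + 1)) := by
          rw [prod_range_succ]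
          congr 1
          · exact prod_congr rfl fun i hi => hpow _ _ (by omega)
          · exact hpow _ _ (by omega)
        rw [hRHS, hLs]
        have key : L * (1 - ζ ^ (k' + 1)) * (qbinom n k' ζ + ζ ^ (k' + 1) * qbinom n (k' + 1) ζ)
            = (1 - ζ ^ (k' + 1)) * (L * qbinom n k' ζ)
              + ζ ^ (k' + 1) * ((L * (1 - ζ ^ (k' + 1))) * qbinom n (k' + 1) ζ) := by ring
        rw [key, h1, ← hLs, h2, hB]
        have e4 : ζ ^ (k' + 1) * ζ ^ (n - k') = ζ ^ (n + 1) := by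
          rw [← pow_add]; congr 1; omega
        calc (1 - ζ ^ (k' + 1)) * A + ζ ^ (k' + 1) * ((1 - ζ ^ (n - k')) * A)
            = A * (1 - ζ ^ (k' + 1) * ζ ^ (n - k')) := by ring
          _ = A * (1 - ζ ^ (n + 1)) := by rw [e4]

open Finset in
lemma qbinom_p_eq_zero {p : ℕ} {e : ℂ} (he : IsPrimitiveRoot e p)
    {k : ℕ} (h0 : 0 < k) (hk : k < p) : qbinom p k e = 0 := by
  have hprod := qbinom_prod e p k (le_of_lt hk)
  have hz : (∏ i ∈ range k, (1 - e ^ (p - k + i + 1))) = 0 := by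
    apply prod_eq_zero (i := k - 1) (mem_range.mpr (by omega))
    have : p - k + (k - 1) + 1 = p := by omega
    rw [this, he.pow_eq_one]; ring
  rw [hz] at hprod
  have hnz : (∏ i ∈ range k, (1 - e ^ (i + 1))) ≠ 0 := by
    apply prod_ne_zero_iff.mpr
    intro i hi
    have hik := mem_range.mp hi
    have hne : e ^ (i + 1) ≠ 1 := by
      intro h
      have := Nat.le_of_dvd (by omega) ((he.pow_eq_one_iff_dvd (i + 1)).mp h)
      omega
    intro h
    apply hne
    have : e ^ (i + 1) = 1 - (1 - e ^ (i + 1)) := by ring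
    rw [this, h]; ring
  exact (mul_eq_zero.mp hprod).resolve_left hnz

lemma qbinom_add_p {p : ℕ} (hp : 1 ≤ p) {e : ℂ} (he : IsPrimitiveRoot e p) :
    ∀ m k, qbinom (m + p) k e
      = qbinom m k e + (if p ≤ k then qbinom m (k - p) e else 0) := by
  intro m
  induction m with
  | zero =>
    intro k
    rcases Nat.lt_trichotomy k p with h | h | h
    · rw [if_neg (by omega), add_zero, zero_add]
      rcases Nat.eq_zero_or_pos k with rfl | h0
      · rw [qbinom_zero, qbinom_zero]
      · rw [qbinom_p_eq_zero he h0 h, qbinom_of_lt h0]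
    · subst h
      rw [if_pos le_rfl, zero_add, qbinom_self, Nat.sub_self, qbinom_zero,
        qbinom_of_lt (by omega)]
      ring
    · rw [if_pos (by omega), zero_add, qbinom_of_lt h, qbinom_of_lt (by omega),
        qbinom_of_lt (by omega)]
      ring
  | succ m ih =>
    intro k
    match k with
    | 0 => rw [if_neg (by omega), qbinom_zero, qbinom_zero]; ring
    | k' + 1 =>
      have step : qbinom (m + 1 + p) (k' + 1) e
          = qbinom (m + p) k' e + e ^ (k' + 1) * qbinom (m + p) (k' + 1) e := by
        have : m + 1 + p = (m + p) + 1 := by omega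
        rw [this]; rfl
      rw [step, ih k', ih (k' + 1)]
      show _ = (qbinom m k' e + e ^ (k' + 1) * qbinom m (k' + 1) e) + _
      rcases Nat.lt_trichotomy (k' + 1) p with h | h | h
      · rw [if_neg (by omega), if_neg (by omega), if_neg (by omega)]; ring
      · -- k' + 1 = p
        rw [if_neg (by omega), if_pos (by omega), if_pos (by omega)]
        have h1 : k' + 1 - p = 0 := by omega
        rw [h1]
        simp only [qbinom_zero]
        have h2 : e ^ (k' + 1) = 1 := by rw [h]; exact he.pow_eq_one
        rw [h2]; ring
      · rw [if_pos (by omega), if_pos (by omega), if_pos (by omega)]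
        have h1 : k' + 1 - p = (k' - p) + 1 := by omega
        have h2 : e ^ (k' + 1) = e ^ (k' - p + 1) := by
          have : k' + 1 = (k' - p + 1) + p := by omega
          rw [this, pow_add, he.pow_eq_one, mul_one]
        rw [h1]
        show _ = _ + (qbinom m (k' - p) e + e ^ (k' - p + 1) * qbinom m (k' - p + 1) e)
        have h3 : k' + 1 - p = k' - p + 1 := by omega
        rw [h2]
        ring

open Finset Polynomial in
lemma poly_prod_roots {p : ℕ} (hp : 0 < p) {e c : ℂ} (he : IsPrimitiveRoot e p)
    (hc : c ≠ 0) (hcp : c ^ p = 1) :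
    ∏ j ∈ range p, (1 - Polynomial.C (c * e ^ j) * Polynomial.X)
      = 1 - Polynomial.X ^ p := by
  have hene : e ≠ 0 := he.ne_zero hp.ne'
  have hne : ∀ j : ℕ, c * e ^ j ≠ 0 := fun j => mul_ne_zero hc (pow_ne_zero _ hene)
  have hfac : ∀ j : ℕ, (1 - Polynomial.C (c * e ^ j) * Polynomial.X)
      = Polynomial.C (-(c * e ^ j)) * (Polynomial.X - Polynomial.C ((c * e ^ j)⁻¹)) := by
    intro j
    have h1 : Polynomial.C (c * e ^ j) * Polynomial.C ((c * e ^ j)⁻¹) = 1 := by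
      rw [← Polynomial.C_mul, mul_inv_cancel₀ (hne j), Polynomial.C_1]
    rw [map_neg, neg_mul, mul_sub, h1]
    ring
  have hrefl : ∏ j ∈ range p, (Polynomial.X - Polynomial.C ((c * e ^ j)⁻¹))
      = ∏ j ∈ range p, (Polynomial.X - Polynomial.C (e ^ j * (e * c⁻¹))) := by
    rw [← prod_range_reflect]
    apply prod_congr rfl
    intro j hj
    have hj' := mem_range.mp hj
    have hmul : e ^ (p - 1 - j) * (e ^ j * e) = 1 := by
      rw [← pow_succ, ← pow_add, show p - 1 - j + (j + 1) = p by omega, he.pow_eq_one]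
    have hv : (c * e ^ (p - 1 - j))⁻¹ = e ^ j * (e * c⁻¹) := by
      apply inv_eq_of_mul_eq_one_right
      calc c * e ^ (p - 1 - j) * (e ^ j * (e * c⁻¹))
          = c * c⁻¹ * (e ^ (p - 1 - j) * (e ^ j * e)) := by ring
        _ = 1 := by rw [hmul, mul_inv_cancel₀ hc, one_mul]
    rw [hv]
  have hXp : (Polynomial.X ^ p - Polynomial.C (1 : ℂ))
      = ∏ j ∈ range p, (Polynomial.X - Polynomial.C (e ^ j * (e * c⁻¹))) :=
    X_pow_sub_C_eq_prod he hp (by rw [mul_pow, he.pow_eq_one, inv_pow, hcp, inv_one, one_mul])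
  set K : ℂ := ∏ j ∈ range p, (-(c * e ^ j)) with hK
  have hmain : ∏ j ∈ range p, (1 - Polynomial.C (c * e ^ j) * Polynomial.X)
      = Polynomial.C K * (Polynomial.X ^ p - Polynomial.C 1) := by
    calc ∏ j ∈ range p, (1 - Polynomial.C (c * e ^ j) * Polynomial.X)
        = ∏ j ∈ range p, (Polynomial.C (-(c * e ^ j)) * (Polynomial.X - Polynomial.C ((c * e ^ j)⁻¹))) :=
          prod_congr rfl fun j _ => hfac j
      _ = (∏ j ∈ range p, Polynomial.C (-(c * e ^ j))) * ∏ j ∈ range p, (Polynomial.X - Polynomial.C ((c * e ^ j)⁻¹)) :=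
          prod_mul_distrib
      _ = Polynomial.C K * (Polynomial.X ^ p - Polynomial.C 1) := by
          rw [← map_prod, hrefl, ← hXp]
  have hKval : K = -1 := by
    have := congrArg (Polynomial.eval (0 : ℂ)) hmain
    simp only [eval_prod, eval_sub, eval_one, eval_mul, eval_C, eval_X, eval_pow,
      mul_zero, sub_zero, zero_pow hp.ne'] at this
    simp only [prod_const_one] at this
    linear_combination this
  rw [hmain, hKval]
  simp only [map_neg, Polynomial.C_1]
  ring


open Finset in
lemma pochSeries_add_p {p : ℕ} (hp : 1 ≤ p) {e : ℂ} (he : IsPrimitiveRoot e p) (m : ℕ) :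
    pochSeries e (m + p) = pochSeries e m * (1 - PowerSeries.X ^ p) := by
  rw [pochSeries, pochSeries, Finset.prod_range_add]
  congr 1
  have hc : e ^ (m + 1) ≠ 0 := pow_ne_zero _ (he.ne_zero (by omega))
  have hcp : (e ^ (m + 1)) ^ p = 1 := by
    rw [← pow_mul, mul_comm, pow_mul, he.pow_eq_one, one_pow]
  have hpoly := poly_prod_roots (by omega : 0 < p) he hc hcp
  have h2 : ∏ j ∈ range p, (1 - PowerSeries.C (e ^ (m + 1) * e ^ j) * PowerSeries.X)
      = 1 - PowerSeries.X ^ p := by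
    have := congrArg (Polynomial.coeToPowerSeries.ringHom (R := ℂ)) hpoly
    simpa only [map_prod, map_sub, map_one, map_mul, map_pow,
      Polynomial.coeToPowerSeries.ringHom_apply, Polynomial.coe_X, Polynomial.coe_C] using this
  rw [← h2]
  apply Finset.prod_congr rfl
  intro i _
  have : e ^ (m + i + 1) = e ^ (m + 1) * e ^ i := by rw [← pow_add]; congr 1; omega
  rw [this]

open Finset in
lemma chainV_zero (top : ℕ) (e : ℂ) : chainV 0 top e = 1 := by
  rw [chainV]
  have hset : (Finset.univ.filter
      (fun f : Fin 1 → Fin (top + 1) => Monotone f ∧ f (Fin.last 0) = Fin.last top))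
      = {fun _ => Fin.last top} := by
    ext f
    simp only [mem_filter, mem_univ, true_and, mem_singleton]
    constructor
    · rintro ⟨-, h2⟩
      funext a
      rw [Subsingleton.elim a (Fin.last 0), h2]
    · rintro rfl
      exact ⟨monotone_const, rfl⟩
  rw [hset, sum_singleton]
  simp

open Finset in
lemma chainV_succ (s top : ℕ) (e : ℂ) :
    chainV (s + 1) top e
      = ∑ k ∈ Finset.range (top + 1),
          PowerSeries.C (e ^ (k * (k + 1)) * qbinom top k e) * PowerSeries.X ^ (2 * k) *
            chainV s k e := by
  rw [chainV]
  rw [← sum_fiberwise_of_maps_to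
    (g := fun f : Fin (s + 1 + 1) → Fin (top + 1) => (f ((Fin.last s).castSucc) : ℕ))
    (t := range (top + 1)) (fun f _ => mem_range.mpr (f _).isLt)]
  apply sum_congr rfl
  intro k hk
  have hk' : k ≤ top := by have := mem_range.mp hk; omega
  rw [chainV, mul_sum, filter_filter]
  have hcast : (k : ℕ) + 1 ≤ top + 1 := by omega
  apply sum_nbij'
    (i := fun f (a : Fin (s + 1)) => (⟨min ((f a.castSucc : ℕ)) k, by omega⟩ : Fin (k + 1)))
    (j := fun g => Fin.snoc (fun a : Fin (s + 1) => Fin.castLE hcast (g a)) (Fin.last top))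
  · -- hi : maps into target
    intro f hf
    obtain ⟨-, ⟨hmono, hlastf⟩, hkey⟩ := mem_filter.mp hf
    have hle : ∀ a : Fin (s + 1), (f a.castSucc : ℕ) ≤ k := by
      intro a
      have := hmono (Fin.castSucc_le_castSucc_iff.mpr (Fin.le_last a))
      rw [Fin.le_def, hkey] at this
      exact this
    refine mem_filter.mpr ⟨mem_univ _, ?_, ?_⟩
    · intro a b hab
      rw [Fin.le_def]
      have := hmono (Fin.castSucc_le_castSucc_iff.mpr hab)
      rw [Fin.le_def] at this
      simp only []
      omega
    · apply Fin.ext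
      simp [hkey]
  · -- hj : back into source
    intro g hg
    obtain ⟨-, hmono, hlast⟩ := mem_filter.mp hg
    have hlast' : (g (Fin.last s) : ℕ) = k := by rw [hlast]; rfl
    refine mem_filter.mpr ⟨mem_univ _, ⟨?_, ?_⟩, ?_⟩
    · rw [Fin.monotone_iff_le_succ]
      intro a
      refine Fin.lastCases ?_ ?_ a
      · rw [Fin.succ_last, Fin.snoc_castSucc, Fin.snoc_last, Fin.le_def]
        simp [hlast']
        omega
      · intro b
        rw [Fin.succ_castSucc b, Fin.snoc_castSucc, Fin.snoc_castSucc, Fin.le_def]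
        have := hmono (Fin.castSucc_le_succ b)
        rw [Fin.le_def] at this
        simpa using this
    · exact Fin.snoc_last _ _
    · show ((Fin.snoc _ (Fin.last top) : Fin (s + 1 + 1) → Fin (top + 1)) _ : ℕ) = k
      rw [Fin.snoc_castSucc]
      simpa using hlast'
  · -- left inverse
    intro f hf
    obtain ⟨-, ⟨hmono, hlastf⟩, hkey⟩ := mem_filter.mp hf
    have hle : ∀ a : Fin (s + 1), (f a.castSucc : ℕ) ≤ k := by
      intro a
      have := hmono (Fin.castSucc_le_castSucc_iff.mpr (Fin.le_last a))
      rw [Fin.le_def, hkey] at this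
      exact this
    funext a
    refine Fin.lastCases ?_ ?_ a
    · rw [Fin.snoc_last, hlastf]
    · intro b
      rw [Fin.snoc_castSucc]
      apply Fin.ext
      simp [Nat.min_eq_left (hle b)]
  · -- right inverse
    intro g hg
    funext a
    apply Fin.ext
    show min (((Fin.snoc _ (Fin.last top) : Fin (s + 1 + 1) → Fin (top + 1)) a.castSucc : ℕ)) k = (g a : ℕ)
    rw [Fin.snoc_castSucc]
    have : (g a : ℕ) ≤ k := by omega
    simp [this]
  · -- terms agree
    intro f hf
    obtain ⟨-, ⟨hmono, hlastf⟩, hkey⟩ := mem_filter.mp hf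
    have hle : ∀ a : Fin (s + 1), (f a.castSucc : ℕ) ≤ k := by
      intro a
      have := hmono (Fin.castSucc_le_castSucc_iff.mpr (Fin.le_last a))
      rw [Fin.le_def, hkey] at this
      exact this
    rw [Fin.prod_univ_castSucc]
    rw [mul_comm]
    congr 1
    · -- last factor equals W k
      have h1 : ((f ((Fin.last s).castSucc)) : ℕ) = k := hkey
      have h2 : ((f (Fin.last s).succ) : ℕ) = top := by rw [Fin.succ_last, hlastf]; rfl
      rw [h1, h2]
    · -- remaining product
      apply Finset.prod_congr rfl
      intro b _
      have hv1 : ((⟨min ((f (b.castSucc).castSucc : ℕ)) k, by omega⟩ : Fin (k + 1)) : ℕ)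
          = (f (b.castSucc).castSucc : ℕ) := by
        simp [Nat.min_eq_left (hle b.castSucc)]
      have hv2 : ((⟨min ((f (b.succ).castSucc : ℕ)) k, by omega⟩ : Fin (k + 1)) : ℕ)
          = (f (b.castSucc).succ : ℕ) := by
        rw [Fin.succ_castSucc]
        exact Nat.min_eq_left (hle b.succ)
      rw [hv1, hv2]

open Finset in
lemma chainV_add_p {p : ℕ} (hp : 1 ≤ p) {e : ℂ} (he : IsPrimitiveRoot e p) :
    ∀ s m : ℕ, chainV s (m + p) e
      = (∑ j ∈ range (s + 1), ((PowerSeries.X : PowerSeries ℂ) ^ (2 * p)) ^ j) * chainV s m e := by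
  intro s
  induction s with
  | zero => intro m; rw [chainV_zero, chainV_zero]; simp
  | succ s ih =>
    intro m
    rw [chainV_succ, chainV_succ]
    have expand : ∀ k : ℕ,
        PowerSeries.C (e ^ (k * (k + 1)) * qbinom (m + p) k e) * PowerSeries.X ^ (2 * k) *
            chainV s k e
          = PowerSeries.C (e ^ (k * (k + 1)) * qbinom m k e) * PowerSeries.X ^ (2 * k) *
              chainV s k e
            + (if p ≤ k then
                PowerSeries.C (e ^ (k * (k + 1)) * qbinom m (k - p) e) * PowerSeries.X ^ (2 * k) *
                  chainV s k e
              else 0) := by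
      intro k
      rw [qbinom_add_p hp he m k]
      split_ifs with h
      · rw [mul_add, map_add, add_mul, add_mul]
      · rw [add_zero, add_zero]
    have hrange : m + p + 1 = p + (m + 1) := by omega
    rw [show ∑ k ∈ range (m + p + 1),
          PowerSeries.C (e ^ (k * (k + 1)) * qbinom (m + p) k e) * PowerSeries.X ^ (2 * k) *
            chainV s k e
        = ∑ k ∈ range (m + p + 1),
          (PowerSeries.C (e ^ (k * (k + 1)) * qbinom m k e) * PowerSeries.X ^ (2 * k) *
              chainV s k e
            + (if p ≤ k then
                PowerSeries.C (e ^ (k * (k + 1)) * qbinom m (k - p) e) * PowerSeries.X ^ (2 * k) *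
                  chainV s k e
              else 0)) from sum_congr rfl fun k _ => expand k]
    rw [sum_add_distrib]
    -- first sum shrinks to range (m+1)
    have hS1 : ∑ k ∈ range (m + p + 1),
        PowerSeries.C (e ^ (k * (k + 1)) * qbinom m k e) * PowerSeries.X ^ (2 * k) *
          chainV s k e
        = ∑ k ∈ range (m + 1),
        PowerSeries.C (e ^ (k * (k + 1)) * qbinom m k e) * PowerSeries.X ^ (2 * k) *
          chainV s k e := by
      symm
      apply sum_subset (range_subset_range.mpr (by omega))
      intro k _ hk
      have : m < k := by have := mem_range.not.mp hk; omega
      rw [qbinom_of_lt this, mul_zero, map_zero, zero_mul, zero_mul]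
    -- second sum: shift index
    have hS2 : ∑ k ∈ range (m + p + 1),
        (if p ≤ k then
            PowerSeries.C (e ^ (k * (k + 1)) * qbinom m (k - p) e) * PowerSeries.X ^ (2 * k) *
              chainV s k e
          else 0)
        = (PowerSeries.X ^ (2 * p) * ∑ j ∈ range (s + 1), ((PowerSeries.X : PowerSeries ℂ) ^ (2 * p)) ^ j)
          * ∑ k ∈ range (m + 1),
            PowerSeries.C (e ^ (k * (k + 1)) * qbinom m k e) * PowerSeries.X ^ (2 * k) *
              chainV s k e := by
      rw [hrange, Finset.sum_range_add]
      have hz : ∑ i ∈ range p, (if p ≤ i then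
          PowerSeries.C (e ^ (i * (i + 1)) * qbinom m (i - p) e) * PowerSeries.X ^ (2 * i) *
            chainV s i e else 0) = 0 := by
        apply sum_eq_zero
        intro i hi
        rw [if_neg (by have := mem_range.mp hi; omega)]
      rw [hz, zero_add]
      trans (∑ i ∈ range (m + 1),
        (PowerSeries.X ^ (2 * p) *
            ∑ j ∈ range (s + 1), ((PowerSeries.X : PowerSeries ℂ) ^ (2 * p)) ^ j) *
          (PowerSeries.C (e ^ (i * (i + 1)) * qbinom m i e) * PowerSeries.X ^ (2 * i) *
            chainV s i e))
      · apply sum_congr rfl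
        intro i hi
        rw [if_pos (show p ≤ p + i by omega)]
        have h1 : p + i - p = i := by omega
        have h2 : e ^ ((p + i) * (p + i + 1)) = e ^ (i * (i + 1)) := by
          have hexp : (p + i) * (p + i + 1) = i * (i + 1) + p * (p + 2 * i + 1) := by ring
          have hone : e ^ (p * (p + 2 * i + 1)) = 1 := by
            rw [pow_mul, he.pow_eq_one, one_pow]
          rw [hexp, pow_add, hone, mul_one]
        have h3 : chainV s (p + i) e
            = (∑ j ∈ range (s + 1), ((PowerSeries.X : PowerSeries ℂ) ^ (2 * p)) ^ j) *
                chainV s i e := by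
          rw [show p + i = i + p by omega]; exact ih i
        have h4 : (PowerSeries.X : PowerSeries ℂ) ^ (2 * (p + i))
            = PowerSeries.X ^ (2 * p) * PowerSeries.X ^ (2 * i) := by
          rw [← pow_add]; congr 1; ring
        rw [h1, h2, h3, h4]
        ring
      · rw [← mul_sum]
    rw [hS1, hS2]
    rw [geom_sum_succ (x := (PowerSeries.X : PowerSeries ℂ) ^ (2 * p)) (n := s + 1)]
    ring

open Finset in
lemma habiroTerm_add_p {p : ℕ} (hp : 1 ≤ p) {e : ℂ} (he : IsPrimitiveRoot e p)
    {t : ℕ} (ht : 1 ≤ t) (m : ℕ) :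
    habiroTerm t e (m + p)
      = ((1 - PowerSeries.X ^ p) * PowerSeries.X ^ p *
          ∑ j ∈ range t, ((PowerSeries.X : PowerSeries ℂ) ^ (2 * p)) ^ j) * habiroTerm t e m := by
  rw [habiroTerm, habiroTerm, pochSeries_add_p hp he m, chainV_add_p hp he (t - 1) m,
    pow_add]
  rw [show t - 1 + 1 = t by omega]
  ring

open Finset in
lemma habiroTerm_coeff_eq_zero (t : ℕ) (e : ℂ) {m N : ℕ} (h : N < m) :
    PowerSeries.coeff N (habiroTerm t e m) = 0 := by
  rw [show habiroTerm t e m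
      = PowerSeries.X ^ m * (pochSeries e m * chainV (t - 1) m e) by rw [habiroTerm]; ring]
  rw [PowerSeries.coeff_X_pow_mul', if_neg (by omega)]

open Finset in
lemma habiroSeries_coeff (t : ℕ) (e : ℂ) (N M : ℕ) (hM : N + 1 ≤ M) :
    PowerSeries.coeff N (habiroSeries t e)
      = ∑ m ∈ range M, PowerSeries.coeff N (habiroTerm t e m) := by
  rw [habiroSeries, PowerSeries.coeff_mk]
  exact sum_subset (range_subset_range.mpr hM)
    (fun m _ hm => habiroTerm_coeff_eq_zero t e (by have := mem_range.not.mp hm; omega))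

open Finset in
lemma key_identity {p : ℕ} (hp : 1 ≤ p) {e : ℂ} (he : IsPrimitiveRoot e p)
    {t : ℕ} (ht : 1 ≤ t) :
    (1 - (1 - PowerSeries.X ^ p) * PowerSeries.X ^ p *
        ∑ j ∈ range t, ((PowerSeries.X : PowerSeries ℂ) ^ (2 * p)) ^ j) * habiroSeries t e
      = ∑ m ∈ range p, habiroTerm t e m := by
  set r : PowerSeries ℂ := (1 - PowerSeries.X ^ p) * PowerSeries.X ^ p *
    ∑ j ∈ range t, ((PowerSeries.X : PowerSeries ℂ) ^ (2 * p)) ^ j with hr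
  have main : habiroSeries t e = (∑ m ∈ range p, habiroTerm t e m) + r * habiroSeries t e := by
    ext N
    rw [map_add, habiroSeries_coeff t e N (p + (N + 1)) (by omega), Finset.sum_range_add]
    congr 1
    · rw [map_sum]
    · have hstep : ∀ i ∈ range (N + 1),
          PowerSeries.coeff N (habiroTerm t e (p + i))
            = PowerSeries.coeff N (r * habiroTerm t e i) := by
        intro i _
        rw [show p + i = i + p by omega, habiroTerm_add_p hp he ht i]
      rw [sum_congr rfl hstep]
      have hsum : ∀ b ≤ N, PowerSeries.coeff b (habiroSeries t e)
          = PowerSeries.coeff b (∑ i ∈ range (N + 1), habiroTerm t e i) := by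
        intro b hb
        rw [map_sum, habiroSeries_coeff t e b (N + 1) (by omega)]
      rw [← map_sum, ← mul_sum]
      rw [PowerSeries.coeff_mul, PowerSeries.coeff_mul]
      apply sum_congr rfl
      intro x hx
      have hx2 : x.2 ≤ N := by
        have := Finset.HasAntidiagonal.mem_antidiagonal.mp hx; omega
      rw [hsum x.2 hx2]
  calc (1 - r) * habiroSeries t e
      = habiroSeries t e - r * habiroSeries t e := by ring
    _ = ∑ m ∈ range p, habiroTerm t e m := by
        nth_rewrite 1 [main]; ring


open Finset in
theorem stmt14 (p : ℕ) (hp : 1 ≤ p) (e : ℂ) (he : IsPrimitiveRoot e p)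
    (t : ℕ) (ht : 1 ≤ t) :
    (1 + (PowerSeries.X : PowerSeries ℂ) ^ ((2 * t + 1) * p)) * habiroSeries t e =
      (1 + (PowerSeries.X : PowerSeries ℂ) ^ p) *
        ∑ m ∈ Finset.range p, habiroTerm t e m := by
  have key := key_identity hp he ht
  have hid : ((1 : PowerSeries ℂ) + PowerSeries.X ^ p) *
      (1 - (1 - PowerSeries.X ^ p) * PowerSeries.X ^ p *
        ∑ j ∈ range t, ((PowerSeries.X : PowerSeries ℂ) ^ (2 * p)) ^ j)
      = 1 + PowerSeries.X ^ ((2 * t + 1) * p) := by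
    have hg := geom_sum_mul ((PowerSeries.X : PowerSeries ℂ) ^ (2 * p)) t
    linear_combination (PowerSeries.X : PowerSeries ℂ) ^ p * hg
  calc (1 + (PowerSeries.X : PowerSeries ℂ) ^ ((2 * t + 1) * p)) * habiroSeries t e
      = ((1 + (PowerSeries.X : PowerSeries ℂ) ^ p) *
          (1 - (1 - PowerSeries.X ^ p) * PowerSeries.X ^ p *
            ∑ j ∈ range t, ((PowerSeries.X : PowerSeries ℂ) ^ (2 * p)) ^ j)) *
          habiroSeries t e := by rw [hid]
    _ = (1 + (PowerSeries.X : PowerSeries ℂ) ^ p) *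
          ((1 - (1 - PowerSeries.X ^ p) * PowerSeries.X ^ p *
            ∑ j ∈ range t, ((PowerSeries.X : PowerSeries ℂ) ^ (2 * p)) ^ j) *
            habiroSeries t e) := by ring
    _ = _ := by rw [key]
end

section
/- Define for n ∈ ℕ the Laurent polynomial a_n(q) := (−1)^n q^{n(n+3)/2 − 1} Σ_{k=1}^{n+1} q^{k²} [n+k choose 2k−1]_q (the n-th Habiro cyclotomic coefficient of the mirror of the (2,5)-torus knot). Then for every natural number m, its evaluation at q = −1 satisfies a_{2m}(−1) = (−1)^m ( 1 + Σ_{ℓ=0}^{m−1} C(m+ℓ, 2ℓ) ), where C(·,·) is the ordinary binomial coefficient. -/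
/-- The `n`-th Habiro cyclotomic coefficient of the mirror of the `(2,5)`-torus knot,
`a_n(q) = (−1)^n q^{n(n+3)/2 − 1} Σ_{k=1}^{n+1} q^{k²} [n+k choose 2k−1]_q`,
evaluated at `ζ ≠ 0`. -/
noncomputable def aCoef (n : ℕ) (ζ : ℂ) : ℂ :=
  (-1) ^ n * ζ ^ (((n * (n + 3) / 2 : ℕ) : ℤ) - 1) *
    ∑ k ∈ Finset.Icc 1 (n + 1), ζ ^ (k ^ 2) * qbinom (n + k) (2 * k - 1) ζ

lemma qb (n k : ℕ) : qbinom n k (-1) =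
    if n % 2 = 0 ∧ k % 2 = 1 then 0 else ((n/2).choose (k/2) : ℂ) := by
  induction n generalizing k with
  | zero =>
    cases k with
    | zero => simp [qbinom]
    | succ k =>
      simp only [qbinom]
      by_cases h : (k+1) % 2 = 1
      · simp [h]
      · rw [if_neg (by simp [h])]
        rw [Nat.choose_eq_zero_of_lt (by omega)]
        simp
  | succ n ih =>
    cases k with
    | zero => simp [qbinom]
    | succ k =>
      rw [show qbinom (n+1) (k+1) (-1)
            = qbinom n k (-1) + (-1)^(k+1) * qbinom n (k+1) (-1) from rfl, ih, ih]
      rcases Nat.even_or_odd n with ⟨a, ha⟩ | ⟨a, ha⟩ <;>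
        rcases Nat.even_or_odd k with ⟨b, hb⟩ | ⟨b, hb⟩ <;> subst ha hb
      · -- n even, k even
        rw [if_neg (show ¬((a+a) % 2 = 0 ∧ (b+b) % 2 = 1) by omega),
            if_pos (show (a+a) % 2 = 0 ∧ (b+b+1) % 2 = 1 by omega),
            if_neg (show ¬((a+a+1) % 2 = 0 ∧ (b+b+1) % 2 = 1) by omega)]
        rw [show (a+a+1)/2 = a by omega, show (b+b+1)/2 = b by omega,
            show (a+a)/2 = a by omega, show (b+b)/2 = b by omega]
        ring
      · -- n even, k odd
        rw [if_pos (show (a+a) % 2 = 0 ∧ (2*b+1) % 2 = 1 by omega),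
            if_neg (show ¬((a+a) % 2 = 0 ∧ (2*b+1+1) % 2 = 1) by omega),
            if_neg (show ¬((a+a+1) % 2 = 0 ∧ (2*b+1+1) % 2 = 1) by omega)]
        rw [show (a+a+1)/2 = a by omega, show (2*b+1+1)/2 = b+1 by omega,
            show (a+a)/2 = a by omega]
        have : (-1 : ℂ) ^ (2*b+1+1) = 1 := by
          rw [show 2*b+1+1 = 2*(b+1) from by ring, pow_mul]; norm_num
        rw [this]; ring
      · -- n odd, k even
        rw [if_neg (show ¬((2*a+1) % 2 = 0 ∧ (b+b) % 2 = 1) by omega),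
            if_neg (show ¬((2*a+1) % 2 = 0 ∧ (b+b+1) % 2 = 1) by omega),
            if_pos (show (2*a+1+1) % 2 = 0 ∧ (b+b+1) % 2 = 1 by omega)]
        rw [show (2*a+1)/2 = a by omega, show (b+b+1)/2 = b by omega,
            show (b+b)/2 = b by omega]
        have : (-1 : ℂ) ^ (b+b+1) = -1 := by
          rw [show b+b+1 = 2*b+1 from by ring, pow_succ, pow_mul]; norm_num
        rw [this]; ring
      · -- n odd, k odd
        rw [if_neg (show ¬((2*a+1) % 2 = 0 ∧ (2*b+1) % 2 = 1) by omega),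
            if_neg (show ¬((2*a+1) % 2 = 0 ∧ (2*b+1+1) % 2 = 1) by omega),
            if_neg (show ¬((2*a+1+1) % 2 = 0 ∧ (2*b+1+1) % 2 = 1) by omega)]
        rw [show (2*a+1+1)/2 = a+1 by omega, show (2*b+1+1)/2 = b+1 by omega,
            show (2*a+1)/2 = a by omega, show (2*b+1)/2 = b by omega]
        have : (-1 : ℂ) ^ (2*b+1+1) = 1 := by
          rw [show 2*b+1+1 = 2*(b+1) from by ring, pow_mul]; norm_num
        rw [this, Nat.choose_succ_succ]
        push_cast; ring

theorem stmt16 (m : ℕ) :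
    aCoef (2 * m) (-1) =
      (-1) ^ m * (1 + ∑ l ∈ Finset.range m, ((m + l).choose (2 * l) : ℂ)) := by
  unfold aCoef
  have hsum : ∑ k ∈ Finset.Icc 1 (2*m + 1), (-1:ℂ) ^ (k^2) * qbinom (2*m + k) (2*k - 1) (-1)
      = -(1 + ∑ l ∈ Finset.range m, ((m + l).choose (2 * l) : ℂ)) := by
    rw [← Finset.sum_filter_add_sum_filter_not (Finset.Icc 1 (2*m+1)) (fun k => k % 2 = 1)]
    have h2 : ∑ k ∈ (Finset.Icc 1 (2*m+1)).filter (fun k => ¬ k % 2 = 1),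
        (-1:ℂ) ^ (k^2) * qbinom (2*m + k) (2*k - 1) (-1) = 0 := by
      apply Finset.sum_eq_zero
      intro k hk
      simp only [Finset.mem_filter, Finset.mem_Icc] at hk
      rw [qb, if_pos ⟨by omega, by omega⟩, mul_zero]
    rw [h2, add_zero]
    have h1 : ∑ k ∈ (Finset.Icc 1 (2*m+1)).filter (fun k => k % 2 = 1),
        (-1:ℂ) ^ (k^2) * qbinom (2*m + k) (2*k - 1) (-1)
        = ∑ j ∈ Finset.range (m+1), -(((m + j).choose (2*j) : ℂ)) := by
      apply Finset.sum_nbij' (fun k => k / 2) (fun j => 2*j + 1)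
      · intro k hk
        simp only [Finset.mem_filter, Finset.mem_Icc] at hk
        simp only [Finset.mem_range]; omega
      · intro j hj
        simp only [Finset.mem_range] at hj
        simp only [Finset.mem_filter, Finset.mem_Icc]; omega
      · intro k hk
        simp only [Finset.mem_filter, Finset.mem_Icc] at hk; omega
      · intro j hj; omega
      · intro k hk
        simp only [Finset.mem_filter, Finset.mem_Icc] at hk
        obtain ⟨⟨h1k, h2k⟩, h3k⟩ := hk
        obtain ⟨j, rfl⟩ : ∃ j, k = 2*j + 1 := ⟨k/2, by omega⟩
        rw [qb, if_neg (by omega)]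
        rw [show (2*m + (2*j+1))/2 = m + j by omega,
            show (2*(2*j+1) - 1)/2 = 2*j by omega,
            show (2*j+1)/2 = j by omega]
        have : (-1:ℂ) ^ ((2*j+1)^2) = -1 := by
          rw [show (2*j+1)^2 = 2*(2*j^2+2*j) + 1 from by ring, pow_succ, pow_mul]
          norm_num
        rw [this]; ring
    rw [h1, Finset.sum_range_succ, show m + m = 2 * m from by ring, Nat.choose_self,
        Finset.sum_neg_distrib]
    push_cast
    ring
  rw [hsum]
  have hN : 2*m * (2*m + 3) / 2 = m * (2*m+3) := by
    rw [show 2*m*(2*m+3) = 2*(m*(2*m+3)) from by ring, Nat.mul_div_cancel_left _ (by norm_num)]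
  rw [hN]
  have hz : (-1:ℂ) ^ ((m*(2*m+3) : ℕ) : ℤ) - 1 = (-1:ℂ) ^ ((m*(2*m+3) : ℕ) : ℤ) - 1 := rfl
  rw [zpow_sub₀ (by norm_num : (-1:ℂ) ≠ 0), zpow_natCast, zpow_one]
  have hp : (-1:ℂ) ^ (m*(2*m+3)) = (-1) ^ m := by
    rw [pow_mul, show 2*m+3 = 2*(m+1)+1 from by ring, pow_succ, pow_mul]
    have h2 : ((-1:ℂ)^m)^2 = 1 := by rw [← pow_mul, mul_comm, pow_mul]; norm_num
    rw [h2, one_pow, one_mul]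
  rw [hp, pow_mul]
  norm_num
  ring
end

section
/- Define for n ∈ ℕ the Laurent polynomial a_n(q) := (−1)^n q^{n(n+3)/2 − 1} Σ_{k=1}^{n+1} q^{k²} [n+k choose 2k−1]_q (the n-th Habiro cyclotomic coefficient of the mirror of the (2,5)-torus knot). Let p ≥ 3 be an odd integer, let e_p be a primitive p-th root of unity in ℂ, and let m ≥ 1 be an integer. Then the evaluations satisfy a_{mp}(e_p) = a_{2m}(−1) + a_{m−1}(1) · ( 2 + a_p(e_p) ). -/
open Finset Polynomial

lemma qb_lt (ζ : ℂ) : ∀ n k : ℕ, n < k → qbinom n k ζ = 0 := by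
  intro n
  induction n with
  | zero =>
    intro k hk
    obtain ⟨j, rfl⟩ : ∃ j, k = j + 1 := ⟨k - 1, by omega⟩
    simp [qbinom]
  | succ n ih =>
    intro k hk
    obtain ⟨j, rfl⟩ : ∃ j, k = j + 1 := ⟨k - 1, by omega⟩
    simp [qbinom, ih j (by omega), ih (j+1) (by omega)]

lemma qb_diag (ζ : ℂ) : ∀ n : ℕ, qbinom n n ζ = 1 := by
  intro n
  induction n with
  | zero => simp [qbinom]
  | succ n ih => simp [qbinom, ih, qb_lt ζ n (n+1) (by omega)]

lemma two_mul_choose_two (n : ℕ) : 2 * n.choose 2 = n * (n - 1) := by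
  rw [Nat.choose_two_right, Nat.mul_div_cancel']
  rcases Nat.even_or_odd n with ⟨t, ht⟩ | ⟨t, ht⟩
  · exact ⟨t * (n - 1), by subst ht; ring⟩
  · refine ⟨n * t, ?_⟩
    have h1 : n - 1 = 2 * t := by omega
    rw [h1]; ring

lemma choose_two_add (M b : ℕ) : (M + b).choose 2 = M.choose 2 + M * b + b.choose 2 := by
  have h1 := two_mul_choose_two (M + b)
  have h2 := two_mul_choose_two M
  have h3 := two_mul_choose_two b
  have key : (M + b) * (M + b - 1) = M * (M - 1) + 2 * (M * b) + b * (b - 1) := by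
    rcases M with _ | M
    · simp
    rcases b with _ | b
    · simp
    have e1 : M + 1 + (b + 1) - 1 = M + b + 1 := by omega
    have e2 : M + 1 - 1 = M := by omega
    have e3 : b + 1 - 1 = b := by omega
    rw [e1, e2, e3]; ring
  omega

lemma coeff_prod_qb (ζ : ℂ) : ∀ (n : ℕ) (t : ℂ) (k : ℕ),
    (∏ i ∈ range n, (1 + C (t * ζ ^ i) * X)).coeff k
      = t ^ k * ζ ^ k.choose 2 * qbinom n k ζ := by
  intro n
  induction n with
  | zero =>
    intro t k
    simp only [range_zero, prod_empty, coeff_one]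
    rcases k with _ | k
    · simp [qbinom]
    · simp [qbinom]
  | succ n ih =>
    intro t k
    rw [prod_range_succ']
    have hf : ∀ i, (1 + C (t * ζ ^ (i + 1)) * X) = (1 + C (t * ζ * ζ ^ i) * X) := by
      intro i; rw [pow_succ]; ring_nf
    rw [prod_congr rfl fun i _ => hf i]
    have hsplit : (∏ i ∈ range n, (1 + C (t * ζ * ζ ^ i) * X)) * (1 + C (t * ζ ^ 0) * X)
        = (∏ i ∈ range n, (1 + C (t * ζ * ζ ^ i) * X))
          + C t * ((∏ i ∈ range n, (1 + C (t * ζ * ζ ^ i) * X)) * X) := by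
      rw [pow_zero, mul_one]; ring
    rw [hsplit, coeff_add, coeff_C_mul]
    rcases k with _ | k
    · rw [show ((∏ i ∈ range n, (1 + C (t * ζ * ζ ^ i) * X)) * X) = ((∏ i ∈ range n, (1 + C (t * ζ * ζ ^ i) * X)) * X ^ 1) from by rw [pow_one]]
      rw [coeff_mul_X_pow']
      simp only [show ¬ (1 ≤ 0) from by omega, if_false, mul_zero, add_zero]
      rw [ih (t * ζ) 0]
      simp [qbinom]
    · rw [coeff_mul_X]
      rw [ih (t * ζ) (k + 1), ih (t * ζ) k]
      have hq : qbinom (n + 1) (k + 1) ζ = qbinom n k ζ + ζ ^ (k + 1) * qbinom n (k + 1) ζ := rfl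
      rw [hq]
      have hch : (k + 1).choose 2 = k.choose 2 + k := by
        rw [Nat.choose_succ_succ]
        simp [Nat.choose_one_right, Nat.add_comm]
      rw [hch]
      rw [mul_pow, mul_pow, pow_succ, pow_add]
      ring
lemma prod_root_fac (p : ℕ) (ζ : ℂ) (hp : 1 ≤ p) (hζ : IsPrimitiveRoot ζ p) :
    (∏ i ∈ range p, (1 + C (ζ ^ i) * X)) = 1 + C ((-1 : ℂ) ^ (p + 1)) * X ^ p := by
  have hζ0 : ζ ≠ 0 := hζ.ne_zero (by omega)
  have base : ∀ (w : ℂ) (_ : IsPrimitiveRoot w p), ∀ y : ℂ,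
      (∏ i ∈ range p, (y - w ^ i)) = y ^ p - 1 := by
    intro w hw y
    have h1 := X_pow_sub_C_eq_prod hw (show 0 < p by omega) (one_pow p)
    have h2 := congrArg (Polynomial.eval y) h1
    simp [eval_prod] at h2
    exact h2.symm
  have key : ∀ t : ℂ, (∏ i ∈ range p, (1 - ζ ^ i * t))
      = (∏ i ∈ range p, (-ζ ^ i)) * (t ^ p - 1) := by
    intro t
    rw [← base ζ⁻¹ hζ.inv t, ← prod_mul_distrib]
    refine prod_congr rfl fun i _ => ?_
    have h0 : ζ ^ i ≠ 0 := pow_ne_zero _ hζ0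
    rw [inv_pow]
    field_simp
    ring
  have hc1 : (∏ i ∈ range p, (-ζ ^ i)) = -1 := by
    have h0 := key 0
    have h00 : (∏ i ∈ range p, (1 - ζ ^ i * 0)) = 1 := by simp
    rw [h00] at h0
    rw [zero_pow (by omega : p ≠ 0)] at h0
    linear_combination h0
  apply Polynomial.funext
  intro x
  have hk := key (-x)
  rw [hc1] at hk
  have hL : (∏ i ∈ range p, (1 - ζ ^ i * (-x))) = ∏ i ∈ range p, (1 + ζ ^ i * x) := by
    refine prod_congr rfl fun i _ => by ring
  rw [hL] at hk
  rw [eval_prod]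
  simp only [eval_add, eval_one, eval_mul, eval_C, eval_X, eval_pow]
  rw [hk, neg_pow x p]
  ring

lemma qb_lucas (p : ℕ) (hp : 1 ≤ p) (ζ : ℂ) (hζ : IsPrimitiveRoot ζ p)
    (hc : Odd p ∨ (p % 2 = 0 ∧ ζ ^ (p / 2) = -1)) (A B a b : ℕ) (ha : a < p) (hb : b < p) :
    qbinom (A * p + a) (B * p + b) ζ = (A.choose B : ℂ) * qbinom a b ζ := by
  have hζ0 : ζ ≠ 0 := hζ.ne_zero (by omega)
  have hζp : ζ ^ p = 1 := hζ.pow_eq_one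
  have hper : ∀ j i : ℕ, (ζ ^ (j * p + i)) = ζ ^ i := by
    intro j i; rw [pow_add, mul_comm j p, pow_mul, hζp, one_pow, one_mul]
  have hcp1 : ∀ n k : ℕ, (∏ i ∈ range n, (1 + C (ζ ^ i) * X)).coeff k
      = ζ ^ k.choose 2 * qbinom n k ζ := by
    intro n k
    have h := coeff_prod_qb ζ n 1 k
    simpa using h
  have hprod := prod_root_fac p ζ hp hζ
  set c : ℂ := (-1 : ℂ) ^ (p + 1) with hcdef
  have hsplitA : ∀ A' : ℕ, (∏ i ∈ range (A' * p), (1 + C (ζ ^ i) * X))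
      = (1 + C c * X ^ p) ^ A' := by
    intro A'
    induction A' with
    | zero => simp
    | succ A' ih =>
      rw [Nat.succ_mul, prod_range_add, ih, pow_succ]
      congr 1
      rw [← hprod]
      exact prod_congr rfl fun i _ => by rw [hper A' i]
  have hbig : (∏ i ∈ range (A * p + a), (1 + C (ζ ^ i) * X))
      = (1 + C c * X ^ p) ^ A * ∏ i ∈ range a, (1 + C (ζ ^ i) * X) := by
    rw [prod_range_add, hsplitA]
    congr 1
    exact prod_congr rfl fun i _ => by rw [hper A i]
  have hpow : (1 + C c * X ^ p) ^ A
      = ∑ j ∈ range (A + 1), C (c ^ j * (A.choose j : ℂ)) * X ^ (p * j) := by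
    rw [add_comm (1 : ℂ[X]) (C c * X ^ p), add_pow]
    refine Finset.sum_congr rfl fun j hj => ?_
    rw [one_pow, mul_one, mul_pow, ← C_pow, ← pow_mul, map_mul, C_eq_natCast]
    ring
  have hterm : ∀ j, (C (c ^ j * (A.choose j : ℂ)) * X ^ (p * j)
        * (∏ i ∈ range a, (1 + C (ζ ^ i) * X))).coeff (B * p + b)
      = c ^ j * (A.choose j : ℂ) *
        (if p * j ≤ B * p + b then ζ ^ ((B * p + b - p * j).choose 2) * qbinom a (B * p + b - p * j) ζ else 0) := by
    intro j
    rw [show C (c ^ j * (A.choose j : ℂ)) * X ^ (p * j) * (∏ i ∈ range a, (1 + C (ζ ^ i) * X))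
        = C (c ^ j * (A.choose j : ℂ)) * ((∏ i ∈ range a, (1 + C (ζ ^ i) * X)) * X ^ (p * j)) from by ring]
    rw [coeff_C_mul, coeff_mul_X_pow']
    split
    · rw [hcp1]
    · simp
  have hRHS : ((1 + C c * X ^ p) ^ A * ∏ i ∈ range a, (1 + C (ζ ^ i) * X)).coeff (B * p + b)
      = c ^ B * (A.choose B : ℂ) * (ζ ^ b.choose 2 * qbinom a b ζ) := by
    rw [hpow, Finset.sum_mul, finset_sum_coeff]
    rw [Finset.sum_congr rfl fun j _ => hterm j]
    rw [Finset.sum_eq_single B]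
    · have hco : p * B = B * p := mul_comm p B
      have h1 : p * B ≤ B * p + b := by omega
      rw [if_pos h1]
      have h2 : B * p + b - p * B = b := by omega
      rw [h2]
    · intro j hj hne
      by_cases hle : p * j ≤ B * p + b
      · have hlt : a < B * p + b - p * j := by
          have hco : p * B = B * p := mul_comm p B
          rcases lt_or_gt_of_ne hne with h | h
          · have h1 : p * (j + 1) ≤ p * B := Nat.mul_le_mul_left p h
            have h2 : p * (j + 1) = p * j + p := by ring
            omega
          · exfalso
            have h1 : p * (B + 1) ≤ p * j := Nat.mul_le_mul_left p h
            have h2 : p * (B + 1) = p * B + p := by ring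
            omega
        rw [if_pos hle, qb_lt ζ a _ hlt, mul_zero, mul_zero]
      · rw [if_neg hle, mul_zero]
    · intro hB
      have hAB : A < B := by
        simp only [Finset.mem_range] at hB
        omega
      rw [Nat.choose_eq_zero_of_lt hAB]
      simp
  have main : ζ ^ (B * p + b).choose 2 * qbinom (A * p + a) (B * p + b) ζ
      = c ^ B * (A.choose B : ℂ) * (ζ ^ b.choose 2 * qbinom a b ζ) := by
    rw [← hcp1, hbig, hRHS]
  have heps : ζ ^ (B * p + b).choose 2 = c ^ B * ζ ^ b.choose 2 := by
    have hck : (B * p + b).choose 2 = (B * p).choose 2 + (B * p) * b + b.choose 2 :=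
      choose_two_add _ _
    have h1 : ζ ^ (B * p * b) = 1 := by
      rw [show B * p * b = p * (B * b) from by ring, pow_mul, hζp, one_pow]
    have h2 : ζ ^ (B * p).choose 2 = c ^ B := by
      rcases hc with hodd | ⟨hpe, hhalf⟩
      · have hdvd : p ∣ (B * p).choose 2 := by
          have h2m := two_mul_choose_two (B * p)
          have hpd : p ∣ 2 * (B * p).choose 2 := by
            rw [h2m]
            exact ⟨B * (B * p - 1), by rw [show B * p = p * B from mul_comm B p, mul_assoc]⟩
          exact (hodd.coprime_two_right).dvd_of_dvd_mul_left hpd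
        obtain ⟨d, hd⟩ := hdvd
        rw [hd, pow_mul, hζp, one_pow, hcdef, ← pow_mul]
        have heven : Even ((p + 1) * B) := by
          rcases hodd with ⟨t, ht⟩
          exact ⟨(t + 1) * B, by subst ht; ring⟩
        rw [heven.neg_one_pow]
      · obtain ⟨q, hq⟩ : ∃ q, p = 2 * q := ⟨p / 2, by omega⟩
        have hq1 : 1 ≤ q := by omega
        have hhalf' : ζ ^ q = -1 := by
          have hpq : p / 2 = q := by omega
          rwa [hpq] at hhalf
        subst hq
        have hch : (B * (2 * q)).choose 2 = q * (B * (B * (2 * q) - 1)) := by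
          have h2m := two_mul_choose_two (B * (2 * q))
          have hrw : B * (2 * q) * (B * (2 * q) - 1) = 2 * (q * (B * (B * (2 * q) - 1))) := by
            generalize B * (2 * q) - 1 = Y
            ring
          omega
        rw [hch, pow_mul, hhalf', hcdef, ← pow_mul]
        rcases Nat.even_or_odd B with hB | hB
        · rw [(hB.mul_right _).neg_one_pow, (hB.mul_left _).neg_one_pow]
        · have hBpos : 1 ≤ B := hB.pos
          have hBq : 1 ≤ B * q := Nat.one_le_iff_ne_zero.mpr (Nat.mul_ne_zero (by omega) (by omega))
          have hha : B * (2 * q) = 2 * (B * q) := by ring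
          have hodd1 : Odd (B * (B * (2 * q) - 1)) := by
            refine hB.mul ⟨B * q - 1, by omega⟩
          have hodd2 : Odd ((2 * q + 1) * B) := Odd.mul ⟨q, by omega⟩ hB
          rw [hodd1.neg_one_pow, hodd2.neg_one_pow]
    rw [hck, pow_add, pow_add, h1, h2]
    ring
  have hK0 : ζ ^ (B * p + b).choose 2 ≠ 0 := pow_ne_zero _ hζ0
  apply mul_left_cancel₀ hK0
  rw [main, heps]
  ring

lemma qb_one (n k : ℕ) : qbinom n k 1 = (n.choose k : ℂ) := by
  have h := qb_lucas 1 le_rfl 1 IsPrimitiveRoot.one (Or.inl odd_one) n k 0 0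
    (by omega) (by omega)
  simpa [qbinom] using h

lemma qb_one_one (ζ : ℂ) : qbinom 1 1 ζ = 1 := by
  simp [qbinom]

lemma sum_range_mul_blocks (f : ℕ → ℂ) (n q : ℕ) :
    ∑ k ∈ range (n * q), f k = ∑ j ∈ range n, ∑ i ∈ range q, f (j * q + i) := by
  induction n with
  | zero => simp
  | succ n ih =>
    rw [Nat.succ_mul, Finset.sum_range_add, ih, sum_range_succ]

lemma sum_eval (p : ℕ) (hp2 : 2 ≤ p) (e : ℂ) (he : IsPrimitiveRoot e p)
    (hc : Odd p ∨ (p % 2 = 0 ∧ e ^ (p / 2) = -1)) (m : ℕ) :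
    ∑ k ∈ Icc 1 (m * p + 1), e ^ (k ^ 2) * qbinom (m * p + k) (2 * k - 1) e
      = e * (∑ j ∈ range (m + 1), ((m + j).choose (2 * j) : ℂ))
        + (∑ j ∈ range (m + 1), ((m + j).choose (2 * j + 1) : ℂ))
          * (∑ i ∈ range p, if p + 1 ≤ 2 * i then e ^ (i ^ 2) * qbinom i (2 * i - 1 - p) e else 0) := by
  have hp1 : 1 ≤ p := by omega
  have hep : e ^ p = 1 := he.pow_eq_one
  have epow : ∀ x y : ℕ, e ^ (p * x + y) = e ^ y := fun x y => by
    rw [pow_add, pow_mul, hep, one_pow, one_mul]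
  have Tval : ∀ j i : ℕ, i < p →
      e ^ ((j * p + i) ^ 2) * qbinom (m * p + (j * p + i)) (2 * (j * p + i) - 1) e
      = (if j = 0 ∧ i = 0 then 1 else 0)
        + (if i = 1 then e * ((m + j).choose (2 * j) : ℂ) else 0)
        + ((m + j).choose (2 * j + 1) : ℂ)
          * (if p + 1 ≤ 2 * i then e ^ (i ^ 2) * qbinom i (2 * i - 1 - p) e else 0) := by
    intro j i hip
    rcases Nat.eq_zero_or_pos i with hi0 | hi1
    · subst hi0
      rcases Nat.eq_zero_or_pos j with hj0 | hj1
      · subst hj0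
        norm_num [qbinom]
      · obtain ⟨j', rfl⟩ : ∃ j', j = j' + 1 := ⟨j - 1, by omega⟩
        have L := qb_lucas p hp1 e he hc (m + j' + 1) (2 * j' + 1) 0 (p - 1)
          (by omega) (by omega)
        have eqtop : m * p + ((j' + 1) * p + 0) = (m + j' + 1) * p + 0 := by ring
        have eqbot : 2 * ((j' + 1) * p + 0) - 1 = (2 * j' + 1) * p + (p - 1) := by
          have hx : 2 * ((j' + 1) * p) = (2 * j' + 1) * p + p := by ring
          omega
        rw [eqtop, eqbot, L, qb_lt e 0 (p - 1) (by omega)]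
        have : ¬(j' + 1 = 0 ∧ (0:ℕ) = 0) := by omega
        simp [this]
    · rcases Nat.lt_or_ge i 2 with hi2 | hi2
      · -- i = 1
        have hieq : i = 1 := by omega
        subst hieq
        have L := qb_lucas p hp1 e he hc (m + j) (2 * j) 1 1 (by omega) (by omega)
        have eqtop : m * p + (j * p + 1) = (m + j) * p + 1 := by ring
        have eqbot : 2 * (j * p + 1) - 1 = (2 * j) * p + 1 := by
          have hx : (2 * j) * p = 2 * (j * p) := by ring
          omega
        have eqexp : (j * p + 1) ^ 2 = p * (j * (j * p) + 2 * j) + 1 := by ring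
        rw [eqtop, eqbot, L, qb_one_one, eqexp, epow]
        have h1 : ¬(j = 0 ∧ (1:ℕ) = 0) := by omega
        have h2 : ¬(p + 1 ≤ 2 * 1) := by omega
        simp [h1, h2]
      · rcases Nat.lt_or_ge (2 * i) (p + 1) with hlo | hhi
        · -- 2 ≤ i, 2i ≤ p : vanishing middle terms
          have L := qb_lucas p hp1 e he hc (m + j) (2 * j) i (2 * i - 1)
            hip (by omega)
          have eqtop : m * p + (j * p + i) = (m + j) * p + i := by ring
          have eqbot : 2 * (j * p + i) - 1 = (2 * j) * p + (2 * i - 1) := by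
            have hx : (2 * j) * p = 2 * (j * p) := by ring
            omega
          rw [eqtop, eqbot, L, qb_lt e i (2 * i - 1) (by omega)]
          have h1 : ¬(j = 0 ∧ i = 0) := by omega
          have h2 : i ≠ 1 := by omega
          have h3 : ¬(p + 1 ≤ 2 * i) := by omega
          simp [h1, h2, h3]
        · -- p + 1 ≤ 2 i
          have L := qb_lucas p hp1 e he hc (m + j) (2 * j + 1) i (2 * i - 1 - p)
            hip (by omega)
          have eqtop : m * p + (j * p + i) = (m + j) * p + i := by ring
          have eqbot : 2 * (j * p + i) - 1 = (2 * j + 1) * p + (2 * i - 1 - p) := by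
            have hx : (2 * j + 1) * p = 2 * (j * p) + p := by ring
            omega
          have eqexp : (j * p + i) ^ 2 = p * (j * (j * p) + 2 * (j * i)) + i ^ 2 := by ring
          rw [eqtop, eqbot, L, eqexp, epow]
          have h1 : ¬(j = 0 ∧ i = 0) := by omega
          have h2 : i ≠ 1 := by omega
          have h3 : p + 1 ≤ 2 * i := hhi
          simp [h1, h2, h3]
          ring
  -- blocks
  have hblocks := sum_range_mul_blocks
    (fun k => e ^ (k ^ 2) * qbinom (m * p + k) (2 * k - 1) e) (m + 1) p
  have hsum1 : ∑ j ∈ range (m + 1), ∑ i ∈ range p,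
        e ^ ((j * p + i) ^ 2) * qbinom (m * p + (j * p + i)) (2 * (j * p + i) - 1) e
      = 1 + (e * (∑ j ∈ range (m + 1), ((m + j).choose (2 * j) : ℂ))
        + (∑ j ∈ range (m + 1), ((m + j).choose (2 * j + 1) : ℂ))
          * (∑ i ∈ range p, if p + 1 ≤ 2 * i then e ^ (i ^ 2) * qbinom i (2 * i - 1 - p) e else 0)) := by
    rw [Finset.sum_congr rfl fun j _ => Finset.sum_congr rfl fun i hi =>
      Tval j i (Finset.mem_range.mp hi)]
    have hsplit : ∀ j ∈ range (m + 1), (∑ i ∈ range p,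
        ((if j = 0 ∧ i = 0 then (1:ℂ) else 0)
          + (if i = 1 then e * ((m + j).choose (2 * j) : ℂ) else 0)
          + ((m + j).choose (2 * j + 1) : ℂ)
            * (if p + 1 ≤ 2 * i then e ^ (i ^ 2) * qbinom i (2 * i - 1 - p) e else 0)))
        = (if j = 0 then (1:ℂ) else 0) + e * ((m + j).choose (2 * j) : ℂ)
          + ((m + j).choose (2 * j + 1) : ℂ)
            * (∑ i ∈ range p, if p + 1 ≤ 2 * i then e ^ (i ^ 2) * qbinom i (2 * i - 1 - p) e else 0) := by
      intro j _
      rw [Finset.sum_add_distrib, Finset.sum_add_distrib, ← Finset.mul_sum]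
      congr 2
      · by_cases hj : j = 0
        · subst hj
          simp only [true_and]
          rw [Finset.sum_ite_eq' (range p) 0 (fun _ => (1:ℂ))]
          rw [if_pos (Finset.mem_range.mpr (by omega))]
          simp
        · simp [hj]
      · rw [Finset.sum_ite_eq' (range p) 1 (fun _ => e * ((m + j).choose (2 * j) : ℂ))]
        rw [if_pos (Finset.mem_range.mpr (by omega))]
    rw [Finset.sum_congr rfl hsplit]
    rw [Finset.sum_add_distrib, Finset.sum_add_distrib, ← Finset.mul_sum, ← Finset.sum_mul]
    rw [Finset.sum_ite_eq' (range (m + 1)) 0 (fun _ => (1:ℂ))]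
    rw [if_pos (Finset.mem_range.mpr (by omega))]
    ring
  have hrange : ∑ k ∈ range ((m + 1) * p), e ^ (k ^ 2) * qbinom (m * p + k) (2 * k - 1) e
      = 1 + ∑ k ∈ Icc 1 (m * p + 1), e ^ (k ^ 2) * qbinom (m * p + k) (2 * k - 1) e := by
    have hmp : (m + 1) * p = m * p + p := by ring
    have hset : range ((m + 1) * p) = insert 0 (Icc 1 ((m + 1) * p - 1)) := by
      ext x
      simp only [Finset.mem_range, Finset.mem_insert, Finset.mem_Icc]
      omega
    rw [hset, Finset.sum_insert (by simp)]
    have hT0 : e ^ ((0:ℕ) ^ 2) * qbinom (m * p + 0) (2 * 0 - 1) e = 1 := by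
      norm_num [qbinom]
    rw [hT0]
    congr 1
    refine (Finset.sum_subset ?_ ?_).symm
    · exact Finset.Icc_subset_Icc le_rfl (by omega)
    · intro x hx hx'
      simp only [Finset.mem_Icc] at hx hx'
      obtain ⟨i, hxe, hi2, hip⟩ : ∃ i, x = m * p + i ∧ 2 ≤ i ∧ i < p :=
        ⟨x - m * p, by omega⟩
      subst hxe
      rw [Tval m i hip]
      have h1 : ¬(m = 0 ∧ i = 0) := by omega
      have h2 : i ≠ 1 := by omega
      have h3 : (m + m).choose (2 * m + 1) = 0 := Nat.choose_eq_zero_of_lt (by omega)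
      simp [h1, h2, h3]
  have h5 := hrange.symm.trans (hblocks.trans hsum1)
  exact add_left_cancel h5

lemma epow_pre (p : ℕ) (hp : 3 ≤ p) (hodd : Odd p) (e : ℂ) (he : IsPrimitiveRoot e p)
    (m : ℕ) : e ^ (((m * p * (m * p + 3) / 2 : ℕ) : ℤ) - 1) = e⁻¹ := by
  have he0 : e ≠ 0 := he.ne_zero (by omega)
  have hep : e ^ p = 1 := he.pow_eq_one
  have h2 : 2 ∣ m * (m * p + 3) := by
    rcases Nat.even_or_odd m with ⟨t, ht⟩ | hm
    · exact ⟨t * (m * p + 3), by subst ht; ring⟩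
    · obtain ⟨s, hs⟩ := hm.mul hodd
      refine ⟨m * (s + 2), ?_⟩
      have h3 : m * p + 3 = 2 * (s + 2) := by omega
      rw [h3]; ring
  obtain ⟨c, hcc⟩ := h2
  have hN : m * p * (m * p + 3) / 2 = p * c := by
    have hx : m * p * (m * p + 3) = p * (m * (m * p + 3)) := by ring
    have hx2 : m * p * (m * p + 3) = 2 * (p * c) := by rw [hx, hcc]; ring
    omega
  rw [zpow_sub₀ he0, zpow_one, zpow_natCast, hN, pow_mul, hep, one_pow, one_div]

lemma neg_one_prim : IsPrimitiveRoot (-1 : ℂ) 2 := by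
  constructor
  · norm_num
  · intro l hl
    rcases Nat.even_or_odd l with he | ho
    · exact he.two_dvd
    · rw [ho.neg_one_pow] at hl; norm_num at hl

lemma aCoef_two_mul_neg_one (m : ℕ) :
    aCoef (2 * m) (-1) = (-1) ^ m * ∑ j ∈ range (m + 1), ((m + j).choose (2 * j) : ℂ) := by
  unfold aCoef
  have hs := sum_eval 2 le_rfl (-1) neg_one_prim (Or.inr ⟨rfl, by norm_num⟩) m
  have hS2 : (∑ i ∈ range 2, if (2:ℕ) + 1 ≤ 2 * i
      then ((-1:ℂ)) ^ (i ^ 2) * qbinom i (2 * i - 1 - 2) (-1) else 0) = 0 := by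
    norm_num [Finset.sum_range_succ]
  rw [hS2, mul_zero, add_zero] at hs
  rw [show (2 * m) = m * 2 from mul_comm 2 m] at *
  rw [hs]
  have hN : m * 2 * (m * 2 + 3) / 2 = m * (2 * m + 3) := by
    have hx : m * 2 * (m * 2 + 3) = 2 * (m * (2 * m + 3)) := by ring
    omega
  rw [hN]
  rw [zpow_sub₀ (by norm_num : (-1:ℂ) ≠ 0), zpow_one, zpow_natCast]
  have h1 : ((-1:ℂ)) ^ (m * 2) = 1 := by
    rw [mul_comm m 2, pow_mul, neg_one_sq, one_pow]
  have h2 : ((-1:ℂ)) ^ (m * (2 * m + 3)) = (-1) ^ m := by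
    rw [show m * (2 * m + 3) = m + 2 * (m * (m + 1)) from by ring, pow_add,
      pow_mul, neg_one_sq, one_pow, mul_one]
  rw [h1, h2]
  ring

lemma aCoef_one_eval (m : ℕ) (hm : 1 ≤ m) :
    aCoef (m - 1) 1 = (-1) ^ (m - 1) * ∑ j ∈ range (m + 1), ((m + j).choose (2 * j + 1) : ℂ) := by
  unfold aCoef
  rw [one_zpow]
  have hm1 : m - 1 + 1 = m := by omega
  rw [hm1]
  have hterm : ∀ k ∈ Icc 1 m, (1:ℂ) ^ (k ^ 2) * qbinom (m - 1 + k) (2 * k - 1) 1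
      = ((m - 1 + k).choose (2 * k - 1) : ℂ) := by
    intro k _
    rw [one_pow, one_mul, qb_one]
  rw [Finset.sum_congr rfl hterm]
  rw [show Icc 1 m = Ico 1 (m + 1) from (Finset.Ico_add_one_right_eq_Icc 1 m).symm]
  rw [Finset.sum_Ico_eq_sum_range]
  have hmm : m + 1 - 1 = m := by omega
  rw [hmm]
  rw [Finset.sum_range_succ (fun j => ((m + j).choose (2 * j + 1) : ℂ))]
  have hz : (m + m).choose (2 * m + 1) = 0 := Nat.choose_eq_zero_of_lt (by omega)
  rw [hz]
  rw [Finset.sum_congr rfl (fun i hi => ?_)]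
  · push_cast
    ring
  · have h1 : m - 1 + (1 + i) = m + i := by omega
    have h2 : 2 * (1 + i) - 1 = 2 * i + 1 := by omega
    rw [h1, h2]

theorem stmt19 (p : ℕ) (hp : 3 ≤ p) (hodd : Odd p) (e : ℂ) (he : IsPrimitiveRoot e p)
    (m : ℕ) (hm : 1 ≤ m) :
    aCoef (m * p) e = aCoef (2 * m) (-1) + aCoef (m - 1) 1 * (2 + aCoef p e) := by
  have he0 : e ≠ 0 := he.ne_zero (by omega)
  have hc : Odd p ∨ (p % 2 = 0 ∧ e ^ (p / 2) = -1) := Or.inl hodd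
  have hL : aCoef (m * p) e = (-1) ^ m * e⁻¹ *
      (e * (∑ j ∈ range (m + 1), ((m + j).choose (2 * j) : ℂ))
        + (∑ j ∈ range (m + 1), ((m + j).choose (2 * j + 1) : ℂ))
          * (∑ i ∈ range p, if p + 1 ≤ 2 * i then e ^ (i ^ 2) * qbinom i (2 * i - 1 - p) e else 0)) := by
    unfold aCoef
    rw [sum_eval p (by omega) e he hc m, epow_pre p hp hodd e he m]
    have hsign : ((-1:ℂ)) ^ (m * p) = (-1) ^ m := by
      rcases Nat.even_or_odd m with hm' | hm'
      · rw [(hm'.mul_right p).neg_one_pow, hm'.neg_one_pow]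
      · rw [(hm'.mul hodd).neg_one_pow, hm'.neg_one_pow]
    rw [hsign]
  have hap : aCoef p e = -e⁻¹ * (2 * e +
      (∑ i ∈ range p, if p + 1 ≤ 2 * i then e ^ (i ^ 2) * qbinom i (2 * i - 1 - p) e else 0)) := by
    unfold aCoef
    rw [show (∑ k ∈ Icc 1 (p + 1), e ^ (k ^ 2) * qbinom (p + k) (2 * k - 1) e)
        = ∑ k ∈ Icc 1 (1 * p + 1), e ^ (k ^ 2) * qbinom (1 * p + k) (2 * k - 1) e from by
      rw [one_mul]]
    rw [sum_eval p (by omega) e he hc 1]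
    have hF1 : (∑ j ∈ range 2, ((1 + j).choose (2 * j) : ℂ)) = 2 := by
      norm_num [Finset.sum_range_succ]
    have hF2 : (∑ j ∈ range 2, ((1 + j).choose (2 * j + 1) : ℂ)) = 1 := by
      norm_num [Finset.sum_range_succ]
    rw [hF1, hF2]
    rw [show p * (p + 3) = 1 * p * (1 * p + 3) from by ring]
    rw [epow_pre p hp hodd e he 1, hodd.neg_one_pow]
    ring
  rw [hL, hap, aCoef_two_mul_neg_one m, aCoef_one_eval m hm]
  have hsgn : ((-1:ℂ)) ^ m = (-1) ^ (m - 1) * (-1) := by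
    conv_lhs => rw [show m = (m - 1) + 1 from by omega]
    rw [pow_succ]
  rw [hsgn]
  field_simp
  ring
end
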